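/- Let f : ℕ^d → ℕ be obliviously-computable, let D ⊆ ℝ^d_{≥0} be a convex polyhedron whose recession cone recc(D) has dimension d, and let g : ℕ^d → ℤ be a quilt-affine function with g(x) = f(x) for all x ∈ D ∩ ℕ^d. Then g eventually dominates f: there exists n ∈ ℕ^d such that f(x) ≤ g(x) for all x ≥ n (pointwise). -/

import Mathlib

/-- A chemical reaction network with species type `σ`, designated input species
`inputs i` for each of the `d` inputs, an output species, and a leader species. -/
structure CRN (d : ℕ) (σ : Type) [Fintype σ] [DecidableEq σ] where
  /-- Each reaction is a pair `(r, p)` of reactant counts and product counts. -/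
  reactions : Finset ((σ → ℕ) × (σ → ℕ))
  inputs : Fin d → σ
  output : σ
  leader : σ
  inputs_inj : Function.Injective inputs
  leader_not_input : ∀ i, inputs i ≠ leader

namespace CRN

variable {d : ℕ} {σ : Type} [Fintype σ] [DecidableEq σ]

/-- One reaction step: some reaction `(r, p)` with `r ≤ c` pointwise fires,
yielding `c - r + p`. -/
def Step (C : CRN d σ) (c c' : σ → ℕ) : Prop :=
  ∃ rp ∈ C.reactions, rp.1 ≤ c ∧ c' = c - rp.1 + rp.2

/-- Reachability by a finite sequence of reaction steps. -/
def Reachable (C : CRN d σ) : (σ → ℕ) → (σ → ℕ) → Prop :=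
  Relation.ReflTransGen C.Step

/-- The initial configuration encoding input `x`: count `x i` of input species
`inputs i`, count 1 of the leader, count 0 of everything else. -/
def init (C : CRN d σ) (x : Fin d → ℕ) : σ → ℕ :=
  fun s => (∑ i, if C.inputs i = s then x i else 0) + (if s = C.leader then 1 else 0)

/-- A configuration is stable if the output count never changes from it. -/
def Stable (C : CRN d σ) (c : σ → ℕ) : Prop :=
  ∀ c', C.Reachable c c' → c' C.output = c C.output

/-- `C` stably computes `f` if from every configuration reachable from an initial
configuration, a stable configuration with correct output count is reachable. -/
def StablyComputes (C : CRN d σ) (f : (Fin d → ℕ) → ℕ) : Prop :=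
  ∀ x c, C.Reachable (C.init x) c →
    ∃ o, C.Reachable c o ∧ C.Stable o ∧ o C.output = f x

/-- A CRN is output-oblivious if the output species is never a reactant. -/
def OutputOblivious (C : CRN d σ) : Prop :=
  ∀ rp ∈ C.reactions, rp.1 C.output = 0

/-- A CRN is output-monotonic if no reaction decreases the output species count. -/
def OutputMonotonic (C : CRN d σ) : Prop :=
  ∀ rp ∈ C.reactions, rp.1 C.output ≤ rp.2 C.output

end CRN

namespace CRN
variable {d : ℕ} {σ : Type} [Fintype σ] [DecidableEq σ]

theorem step_add {C : CRN d σ} {c c' e : σ → ℕ} (h : C.Step c c') :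
    C.Step (c + e) (c' + e) := by
  obtain ⟨rp, hmem, hle, rfl⟩ := h
  refine ⟨rp, hmem, fun s => le_trans (hle s) (Nat.le_add_right _ _), ?_⟩
  funext s
  have h1 : rp.1 s ≤ c s := hle s
  simp only [Pi.add_apply, Pi.sub_apply]
  omega

theorem reachable_add {C : CRN d σ} {c c' : σ → ℕ} (e : σ → ℕ)
    (h : C.Reachable c c') : C.Reachable (c + e) (c' + e) := by
  induction h with
  | refl => exact Relation.ReflTransGen.refl
  | tail _ hstep ih => exact Relation.ReflTransGen.tail ih (step_add hstep)

theorem output_mono {C : CRN d σ} (hOO : C.OutputOblivious) {c c' : σ → ℕ}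
    (h : C.Reachable c c') : c C.output ≤ c' C.output := by
  induction h with
  | refl => exact le_rfl
  | tail _ hstep ih =>
    obtain ⟨rp, hmem, hle, rfl⟩ := hstep
    have h0 := hOO rp hmem
    simp only [Pi.add_apply, Pi.sub_apply, h0]
    omega

/-- count of input species only -/
def inputMap (C : CRN d σ) (u : Fin d → ℕ) : σ → ℕ :=
  fun s => ∑ i, if C.inputs i = s then u i else 0

theorem inputMap_add (C : CRN d σ) (u w : Fin d → ℕ) :
    C.inputMap (u + w) = C.inputMap u + C.inputMap w := by
  funext s
  simp only [inputMap, Pi.add_apply, ← Finset.sum_add_distrib]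
  refine Finset.sum_congr rfl fun i _ => ?_
  split <;> simp

theorem init_add (C : CRN d σ) (x u : Fin d → ℕ) :
    C.init (x + u) = C.init x + C.inputMap u := by
  funext s
  simp only [init, inputMap, Pi.add_apply]
  have hsplit : (∑ i, if C.inputs i = s then x i + u i else 0)
      = (∑ i, if C.inputs i = s then x i else 0)
        + ∑ i, if C.inputs i = s then u i else 0 := by
    rw [← Finset.sum_add_distrib]
    exact Finset.sum_congr rfl fun i _ => by split <;> simp
  omega

theorem output_le {C : CRN d σ} {f : (Fin d → ℕ) → ℕ} (hOO : C.OutputOblivious)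
    (hSC : C.StablyComputes f) {x : Fin d → ℕ} {c : σ → ℕ}
    (h : C.Reachable (C.init x) c) : c C.output ≤ f x := by
  obtain ⟨o, hco, _, ho⟩ := hSC x c h
  exact ho ▸ output_mono hOO hco

theorem reach_congr {C : CRN d σ} {a a' b b' : σ → ℕ} (ha : a = a') (hb : b = b')
    (h : C.Reachable a b) : C.Reachable a' b' := ha ▸ hb ▸ h

theorem inputMap_zero (C : CRN d σ) : C.inputMap 0 = 0 := by
  funext s; simp [CRN.inputMap]

theorem pump_exists {C : CRN d σ} {f : (Fin d → ℕ) → ℕ}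
    (hOO : C.OutputOblivious) (hSC : C.StablyComputes f) (z₀ v : Fin d → ℕ) :
    ∃ j m : ℕ, 0 < m ∧ f (z₀ + j • v) ≤ f (z₀ + (j + m) • v) ∧
      ∀ x : Fin d → ℕ, z₀ + j • v ≤ x → ∀ t : ℕ,
        f x + t * (f (z₀ + (j + m) • v) - f (z₀ + j • v)) ≤ f (x + (t * m) • v) := by
  classical
  set P : ℕ → (σ → ℕ) → Prop :=
    fun j c => C.Reachable (C.init (z₀ + j • v)) c ∧ c C.output = f (z₀ + j • v) with hP
  have hb := hSC (z₀ + (0 : ℕ) • v) (C.init (z₀ + (0 : ℕ) • v)) Relation.ReflTransGen.refl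
  -- step
  have Hstep : ∀ (j : ℕ) (c : σ → ℕ), P j c →
      ∃ c', C.Reachable (c + C.inputMap v) c' ∧ P (j + 1) c' := by
    intro j c hc
    have hinit : C.init (z₀ + (j + 1) • v) = C.init (z₀ + j • v) + C.inputMap v := by
      rw [add_smul, one_smul, ← add_assoc, init_add]
    have hreach : C.Reachable (C.init (z₀ + (j + 1) • v)) (c + C.inputMap v) := by
      rw [hinit]; exact reachable_add _ hc.1
    obtain ⟨o, h1, _, h3⟩ := hSC (z₀ + (j + 1) • v) _ hreach
    exact ⟨o, h1, Relation.ReflTransGen.trans hreach h1, h3⟩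
  -- the sequence
  let Q : ∀ j : ℕ, {c : σ → ℕ // P j c} := fun j =>
    Nat.rec ⟨hb.choose, hb.choose_spec.1, hb.choose_spec.2.2⟩
      (fun j ih => ⟨(Hstep j ih.1 ih.2).choose,
        (Hstep j ih.1 ih.2).choose_spec.2⟩) j
  have link : ∀ j : ℕ, C.Reachable ((Q j).1 + C.inputMap v) ((Q (j + 1)).1) :=
    fun j => (Hstep j (Q j).1 (Q j).2).choose_spec.1
  -- composite runs
  have comp : ∀ a b : ℕ, C.Reachable ((Q a).1 + C.inputMap (b • v)) ((Q (a + b)).1) := by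
    intro a b
    induction b with
    | zero =>
      refine reach_congr ?_ rfl (Relation.ReflTransGen.refl (a := (Q a).1))
      rw [zero_smul, inputMap_zero, add_zero]
    | succ b ih =>
      have h1 : C.inputMap ((b + 1) • v) = C.inputMap (b • v) + C.inputMap v := by
        rw [add_smul, one_smul, inputMap_add]
      have h2 : C.Reachable ((Q a).1 + C.inputMap ((b + 1) • v))
          (((Q a).1 + C.inputMap (b • v)) + C.inputMap v) := by
        refine reach_congr ?_ rfl (Relation.ReflTransGen.refl)
        rw [h1, add_assoc]
      refine h2.trans (Relation.ReflTransGen.trans (reachable_add _ ih) ?_)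
      exact reach_congr rfl (by rw [show a + (b + 1) = (a + b) + 1 by omega]) (link (a + b))
  -- Dickson's lemma
  have HPWO : (Set.univ : Set (σ → ℕ)).IsPWO :=
    Set.isPWO_of_wellQuasiOrderedLE Set.univ
  obtain ⟨j, j', hjj', hle⟩ := Set.PartiallyWellOrderedOn.exists_lt HPWO (f := fun j => (Q j).1) (fun _ => Set.mem_univ _)
  have hle' : ∀ s, (Q j).1 s ≤ (Q j').1 s := fun s => hle s
  set m := j' - j with hm
  have hm0 : 0 < m := by omega
  have hj' : j + m = j' := by omega
  -- the surplus
  set e : σ → ℕ := (Q j').1 - (Q j).1 with he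
  have heq : (Q j).1 + e = (Q j').1 := by
    funext s
    have hs := hle' s
    simp only [he, Pi.add_apply, Pi.sub_apply]
    omega
  -- pump
  have pump : ∀ t : ℕ,
      C.Reachable ((Q j).1 + C.inputMap ((t * m) • v)) ((Q j).1 + t • e) := by
    intro t
    induction t with
    | zero =>
      refine reach_congr ?_ ?_ (Relation.ReflTransGen.refl (a := (Q j).1))
      · rw [Nat.zero_mul, zero_smul, inputMap_zero, add_zero]
      · rw [zero_smul, add_zero]
    | succ t ih =>
      have h1 : C.Reachable ((Q j).1 + C.inputMap (((t + 1) * m) • v))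
          (((Q j).1 + C.inputMap ((t * m) • v)) + C.inputMap (m • v)) := by
        refine reach_congr ?_ rfl Relation.ReflTransGen.refl
        rw [show (t + 1) * m = t * m + m by ring, add_smul, inputMap_add, add_assoc]
      refine h1.trans (Relation.ReflTransGen.trans (reachable_add _ ih) ?_)
      have h3 : C.Reachable (((Q j).1 + C.inputMap (m • v)) + t • e)
          (((Q j).1 + e) + t • e) := by
        refine reachable_add _ (reach_congr rfl ?_ (comp j m))
        rw [hj', ← heq]
      refine Relation.ReflTransGen.trans (reach_congr ?_ rfl h3) ?_
      · funext s; simp only [Pi.add_apply]; omega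
      · refine reach_congr rfl ?_ Relation.ReflTransGen.refl
        funext s
        simp only [Pi.add_apply, Pi.smul_apply, smul_eq_mul]
        ring
  -- output values
  have hQout : ∀ a : ℕ, (Q a).1 C.output = f (z₀ + a • v) := fun a => (Q a).2.2
  have hzv : z₀ + j' • v = z₀ + (j + m) • v := by rw [hj']
  have h2' : (Q j').1 C.output = f (z₀ + (j + m) • v) := by
    have := hQout j'; rwa [hzv] at this
  refine ⟨j, m, hm0, ?_, ?_⟩
  · have h1 := hQout j
    have hs := hle' C.output
    omega
  · intro x hx t
    obtain ⟨u, hu⟩ := le_iff_exists_add.mp hx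
    have hc₁ : C.Reachable (C.init x) ((Q j).1 + C.inputMap u) := by
      rw [hu, init_add]
      exact reachable_add _ (Q j).2.1
    obtain ⟨o, hT, _, hoY⟩ := hSC x _ hc₁
    -- big run from init (x + (t*m)•v)
    have r1 : C.Reachable (C.init (x + (t * m) • v))
        (((Q j).1 + C.inputMap ((t * m) • v)) + C.inputMap u) := by
      have e1 : C.init (x + (t * m) • v)
          = C.init (z₀ + j • v) + (C.inputMap u + C.inputMap ((t * m) • v)) := by
        rw [hu, init_add, init_add, add_assoc]
      rw [e1]
      refine Relation.ReflTransGen.trans (reachable_add _ (Q j).2.1) ?_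
      refine reach_congr ?_ rfl Relation.ReflTransGen.refl
      funext s; simp only [Pi.add_apply]; omega
    have r2 : C.Reachable (((Q j).1 + C.inputMap ((t * m) • v)) + C.inputMap u)
        (((Q j).1 + t • e) + C.inputMap u) := reachable_add _ (pump t)
    have r3 : C.Reachable (((Q j).1 + t • e) + C.inputMap u) (o + t • e) := by
      refine reach_congr ?_ rfl (reachable_add (t • e) hT)
      funext s; simp only [Pi.add_apply]; omega
    have hrun := (r1.trans r2).trans r3
    have hb2 := output_le hOO hSC hrun
    have h10 : (o + t • e) C.output = o C.output + t * e C.output := by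
      simp [Pi.add_apply, Pi.smul_apply, smul_eq_mul]
    rw [h10, hoY] at hb2
    have h11 : f (z₀ + (j + m) • v) - f (z₀ + j • v) = e C.output := by
      have h1 := hQout j
      have hs := hle' C.output
      have h3 : (Q j).1 C.output + e C.output = (Q j').1 C.output := by
        have := congrFun heq C.output; simpa using this
      omega
    rw [h11]
    exact hb2

end CRN

/-- `f` is obliviously-computable if some output-oblivious CRN stably computes it. -/
def ObliviouslyComputable {d : ℕ} (f : (Fin d → ℕ) → ℕ) : Prop :=
  ∃ (n : ℕ) (C : CRN d (Fin n)), C.OutputOblivious ∧ C.StablyComputes f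

/-- A function `g : ℕ^d → ℤ` is quilt-affine if it is nondecreasing and is the sum
of a rational linear function with nonnegative gradient and a periodic offset. -/
def QuiltAffine {d : ℕ} (g : (Fin d → ℕ) → ℤ) : Prop :=
  Monotone g ∧
  ∃ p : ℕ, 0 < p ∧
    ∃ (grad : Fin d → ℚ) (B : (Fin d → ZMod p) → ℚ),
      (∀ i, 0 ≤ grad i) ∧
      ∀ x : Fin d → ℕ,
        (g x : ℚ) = (∑ i, grad i * (x i : ℚ)) + B (fun i => (x i : ZMod p))

/-- View a natural-number vector as a real vector. -/
def natToR {d : ℕ} (x : Fin d → ℕ) : Fin d → ℝ :=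
  fun i => (x i : ℝ)

theorem geo_lemma {d l : ℕ} (A : Fin l → Fin d → ℝ) (c : Fin l → ℝ) (D : Set (Fin d → ℝ))
    (hD : D = {x | ∀ k, c k ≤ ∑ i, A k i * x i})
    (hDpos : ∀ x ∈ D, ∀ i, 0 ≤ x i)
    (x₀ : Fin d → ℕ) (hx₀ : natToR x₀ ∈ D)
    (hrecc : affineSpan ℝ
      {y : Fin d → ℝ | ∀ x ∈ D, ∀ t : ℝ, 0 ≤ t → x + t • y ∈ D} = ⊤)
    (p : ℕ) (hp : 0 < p) :
    ∃ v : Fin d → ℕ, (∀ i, p ∣ v i) ∧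
      (∀ z : Fin d → ℕ, natToR z ∈ D → ∀ k : ℕ, natToR (z + k • v) ∈ D) ∧
      (∀ x : Fin d → ℕ, x₀ ≤ x → ∀ M : ℕ, 0 < M →
        ∃ t : ℕ, 0 < t ∧ natToR (x + (t * M) • v) ∈ D) := by
  classical
  set S : Set (Fin d → ℝ) := {y | ∀ x ∈ D, ∀ t : ℝ, 0 ≤ t → x + t • y ∈ D} with hS
  -- D is convex
  have hDconv : Convex ℝ D := by
    rw [hD]
    intro y₁ h₁ y₂ h₂ a b ha hb hab
    intro k
    have h₁k := h₁ k
    have h₂k := h₂ k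
    have e : ∑ i, A k i * (a • y₁ + b • y₂) i
        = a * (∑ i, A k i * y₁ i) + b * (∑ i, A k i * y₂ i) := by
      rw [Finset.mul_sum, Finset.mul_sum, ← Finset.sum_add_distrib]
      refine Finset.sum_congr rfl fun i _ => ?_
      simp only [Pi.add_apply, Pi.smul_apply, smul_eq_mul]
      ring
    rw [e]
    have q1 := mul_le_mul_of_nonneg_left h₁k ha
    have q2 := mul_le_mul_of_nonneg_left h₂k hb
    have q3 : a * c k + b * c k = c k := by linear_combination (c k) * hab
    linarith [q1, q2, q3]
  -- S is convex
  have hSconv : Convex ℝ S := by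
    intro y₁ h₁ y₂ h₂ a b ha hb hab
    intro x hx t ht
    have e : x + t • (a • y₁ + b • y₂) = a • (x + t • y₁) + b • (x + t • y₂) := by
      funext i
      simp only [Pi.add_apply, Pi.smul_apply, smul_eq_mul]
      linear_combination (x i) * hab.symm
    rw [e]
    exact hDconv (h₁ x hx t ht) (h₂ x hx t ht) ha hb hab
  -- S is closed under nonnegative scaling
  have hSscale : ∀ lam : ℝ, 0 ≤ lam → ∀ y ∈ S, lam • y ∈ S := by
    intro lam hlam y hy x hx t ht
    have e : x + t • lam • y = x + (t * lam) • y := by rw [smul_smul]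
    rw [e]
    exact hy x hx _ (mul_nonneg ht hlam)
  -- S lies in the nonnegative orthant
  have hSpos : ∀ y ∈ S, ∀ i, 0 ≤ y i := by
    intro y hy i
    by_contra hneg
    push_neg at hneg
    have hx0i : (0:ℝ) ≤ natToR x₀ i := Nat.cast_nonneg _
    have hT : (0:ℝ) ≤ (natToR x₀ i + 1) / (-(y i)) := by
      apply div_nonneg <;> linarith
    have hmem := hy (natToR x₀) hx₀ _ hT
    have hge := hDpos _ hmem i
    simp only [Pi.add_apply, Pi.smul_apply, smul_eq_mul] at hge
    have hyne : -(y i) ≠ 0 := by linarith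
    have hcomp : (natToR x₀ i + 1) / (-(y i)) * y i = -(natToR x₀ i + 1) := by
      rw [div_mul_eq_mul_div, div_neg, mul_div_assoc, div_self (ne_of_lt hneg), mul_one]
    rw [hcomp] at hge
    linarith
  -- interior point of S
  have hint : (interior S).Nonempty :=
    (hSconv.interior_nonempty_iff_affineSpan_eq_top).mpr hrecc
  obtain ⟨ystar, hystar⟩ := hint
  obtain ⟨ε, hε, hball⟩ : ∃ ε > 0, Metric.ball ystar ε ⊆ S := by
    rcases Metric.isOpen_iff.mp isOpen_interior ystar hystar with ⟨ε, hε, hb⟩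
    exact ⟨ε, hε, hb.trans interior_subset⟩
  have hystarS : ystar ∈ S := interior_subset hystar
  -- scale up
  set M : ℕ := ⌈(2:ℝ)/ε⌉₊ + 1 with hM
  have hM0 : (0:ℝ) < M := by positivity
  have hM2 : (2:ℝ) ≤ (M:ℝ) * ε := by
    have h1 : (2:ℝ)/ε ≤ ⌈(2:ℝ)/ε⌉₊ := Nat.le_ceil _
    have h2 : (2:ℝ)/ε ≤ (M:ℝ) := by
      push_cast [hM]
      linarith
    calc (2:ℝ) = (2/ε) * ε := by field_simp
    _ ≤ (M:ℝ) * ε := by nlinarith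
  set y' : Fin d → ℝ := (M:ℝ) • ystar with hy'
  have hball' : ∀ u : Fin d → ℝ, dist u y' < (M:ℝ) * ε → u ∈ S := by
    intro u hu
    have h1 : ((M:ℝ)⁻¹) • u ∈ Metric.ball ystar ε := by
      rw [Metric.mem_ball]
      have e1 : ystar = ((M:ℝ)⁻¹) • y' := by
        rw [hy', smul_smul, inv_mul_cancel₀ (ne_of_gt hM0), one_smul]
      rw [e1, dist_smul₀, Real.norm_eq_abs, abs_inv,
        abs_of_pos hM0, inv_mul_lt_iff₀ hM0]
      exact hu
    have h2 := hSscale (M:ℝ) (le_of_lt hM0) _ (hball h1)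
    rwa [smul_smul, mul_inv_cancel₀ (ne_of_gt hM0), one_smul] at h2
  -- nonneg coords of y'
  have hy'0 : ∀ i, 0 ≤ y' i := by
    intro i
    have := hSpos ystar hystarS i
    simp only [hy', Pi.smul_apply, smul_eq_mul]
    positivity
  -- integer approximation
  set v'' : Fin d → ℕ := fun i => ⌊y' i⌋₊ with hv''
  have hfloor : ∀ i, |(v'' i : ℝ) - y' i| ≤ 1 := by
    intro i
    have h1 : (v'' i : ℝ) ≤ y' i := Nat.floor_le (hy'0 i)
    have h2 : y' i < v'' i + 1 := Nat.lt_floor_add_one _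
    rw [abs_le]
    constructor <;> linarith
  have hMe1 : (1:ℝ) ≤ (M:ℝ) * ε - 1 := by linarith
  have hKey : ∀ u : Fin d → ℝ, (∀ i, |u i| < (M:ℝ) * ε - 1) → natToR v'' + u ∈ S := by
    intro u hu
    apply hball'
    rw [dist_pi_lt_iff (by linarith : (0:ℝ) < (M:ℝ) * ε)]
    intro i
    rw [Real.dist_eq]
    have e : (natToR v'' + u) i - y' i = u i + ((v'' i : ℝ) - y' i) := by
      simp only [Pi.add_apply, natToR]; ring
    rw [e]
    calc |u i + ((v'' i : ℝ) - y' i)| ≤ |u i| + |(v'' i : ℝ) - y' i| := abs_add_le _ _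
    _ < ((M:ℝ) * ε - 1) + 1 := by
        have := hfloor i
        have := hu i
        linarith
    _ = (M:ℝ) * ε := by ring
  have hv''S : natToR v'' ∈ S := by
    have := hKey 0 (fun i => by simp; linarith)
    simpa using this
  -- the final integer vector
  refine ⟨fun i => p * v'' i, fun i => ⟨v'' i, rfl⟩, ?_, ?_⟩
  · -- G1 : translates stay in D
    intro z hz k
    have hvS : ((p:ℝ) • natToR v'') ∈ S := hSscale _ (by positivity) _ hv''S
    have hmem := hvS (natToR z) hz (k:ℝ) (Nat.cast_nonneg _)
    have e : natToR (z + k • (fun i => p * v'' i)) = natToR z + (k:ℝ) • (p:ℝ) • natToR v'' := by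
      funext i
      simp only [natToR, Pi.add_apply, Pi.smul_apply, smul_eq_mul]
      push_cast
      ring
    rw [e]
    exact hmem
  · -- G3 : absorption
    intro x hx M' hM'
    refine ⟨(∑ i, x i) + 1, Nat.succ_pos _, ?_⟩
    set t : ℕ := (∑ i, x i) + 1 with ht
    set N : ℝ := ((t * M' : ℕ) : ℝ) with hN
    have hN1 : (t:ℝ) ≤ N := by
      rw [hN, Nat.cast_mul]
      have h1 : (1:ℝ) ≤ (M' : ℝ) := by exact_mod_cast hM'
      have h2 : (0:ℝ) ≤ (t:ℝ) := by positivity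
      nlinarith [h1, h2]
    have hNt : (0:ℝ) < N := by
      have : (0:ℝ) < (t:ℝ) := by positivity
      linarith
    have hpN : (0:ℝ) < (p:ℝ) * N := by positivity
    set w : Fin d → ℝ := natToR x - natToR x₀ with hw
    have hwle : ∀ i, 0 ≤ w i ∧ w i < (p:ℝ) * N := by
      intro i
      constructor
      · simp only [hw, Pi.sub_apply, natToR, sub_nonneg]
        exact_mod_cast hx i
      · have h1 : (x i : ℝ) ≤ ∑ j, (x j : ℝ) := by
          have := Finset.single_le_sum (f := fun j => (x j : ℝ))
            (fun j _ => Nat.cast_nonneg _) (Finset.mem_univ i)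
          exact this
        have h2 : (∑ j, (x j : ℝ)) < (t:ℝ) := by
          rw [ht]; push_cast; linarith
        have h3 : (1:ℝ) ≤ (p:ℝ) := Nat.one_le_cast.mpr hp
        have h4 : N ≤ (p:ℝ) * N := by nlinarith
        have h5 : w i ≤ (x i : ℝ) := by
          simp only [hw, Pi.sub_apply, natToR]
          have : (0:ℝ) ≤ (x₀ i : ℝ) := Nat.cast_nonneg _
          linarith
        linarith
    have hu : natToR v'' + (((p:ℝ) * N)⁻¹) • w ∈ S := by
      apply hKey
      intro i
      have h1 := (hwle i).1
      have h2 := (hwle i).2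
      have h3 : |(((p:ℝ) * N)⁻¹ • w) i| = w i / ((p:ℝ) * N) := by
        simp only [Pi.smul_apply, smul_eq_mul]
        rw [abs_of_nonneg (by positivity)]
        ring
      rw [h3]
      have h4 : w i / ((p:ℝ) * N) < 1 := (div_lt_one hpN).mpr h2
      linarith
    have hu2 : ((p:ℝ) * N) • (natToR v'' + (((p:ℝ) * N)⁻¹) • w) ∈ S :=
      hSscale _ (le_of_lt hpN) _ hu
    have e2 : ((p:ℝ) * N) • (natToR v'' + (((p:ℝ) * N)⁻¹) • w)
        = ((p:ℝ) * N) • natToR v'' + w := by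
      rw [smul_add, smul_smul, mul_inv_cancel₀ (ne_of_gt hpN), one_smul]
    rw [e2] at hu2
    have hmem := hu2 (natToR x₀) hx₀ 1 zero_le_one
    have e3 : natToR (x + (t * M') • (fun i => p * v'' i))
        = natToR x₀ + (1:ℝ) • (((p:ℝ) * N) • natToR v'' + w) := by
      funext i
      simp only [natToR, Pi.add_apply, Pi.smul_apply, Pi.sub_apply, smul_eq_mul, hw, hN]
      push_cast
      ring
    rw [e3]
    exact hmem


theorem quilt_step {d : ℕ} (g : (Fin d → ℕ) → ℤ) (p : ℕ) (hp : 0 < p)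
    (grad : Fin d → ℚ) (B : (Fin d → ZMod p) → ℚ)
    (hform : ∀ x : Fin d → ℕ,
      (g x : ℚ) = (∑ i, grad i * (x i : ℚ)) + B (fun i => (x i : ZMod p)))
    (v : Fin d → ℕ) (hv : ∀ i, p ∣ v i) :
    ∃ δ : ℤ, ∀ (x : Fin d → ℕ) (k : ℕ), g (x + k • v) = g x + k * δ := by
  set γ : ℚ := ∑ i, grad i * (v i : ℚ) with hγdef
  have key : ∀ (x : Fin d → ℕ) (k : ℕ), (g (x + k • v) : ℚ) = g x + k * γ := by
    intro x k
    rw [hform, hform]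
    have hres : (fun i => (((x + k • v) i : ℕ) : ZMod p)) = fun i => ((x i : ℕ) : ZMod p) := by
      funext i
      obtain ⟨ci, hci⟩ := hv i
      simp only [Pi.add_apply, Pi.smul_apply, smul_eq_mul, hci]
      push_cast
      rw [ZMod.natCast_self]
      ring
    rw [hres]
    have hsum : (∑ i, grad i * (((x + k • v) i : ℕ) : ℚ))
        = (∑ i, grad i * (x i : ℚ)) + (k : ℚ) * γ := by
      rw [hγdef, Finset.mul_sum, ← Finset.sum_add_distrib]
      refine Finset.sum_congr rfl fun i _ => ?_
      simp only [Pi.add_apply, Pi.smul_apply, smul_eq_mul]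
      push_cast
      ring
    rw [hsum]
    ring
  refine ⟨g ((0 : Fin d → ℕ) + (1:ℕ) • v) - g 0, ?_⟩
  have hγval : γ = ((g ((0 : Fin d → ℕ) + (1:ℕ) • v) - g 0 : ℤ) : ℚ) := by
    have h := key 0 1
    push_cast at h ⊢
    linarith
  intro x k
  have h := key x k
  rw [hγval] at h
  exact_mod_cast h

/-- **Determined extensions eventually dominate.** Let `f : ℕ^d → ℕ` be
obliviously-computable, let `D ⊆ ℝ^d_{≥0}` be a (nonempty at integer points)
convex polyhedron whose recession cone is full-dimensional, and let `g` be a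
quilt-affine function with `g = f` on `D ∩ ℕ^d`.  Then `g` eventually dominates
`f`: there is `n ∈ ℕ^d` with `f(x) ≤ g(x)` for all `x ≥ n` pointwise. -/
theorem determined_extension_eventually_dominates {d l : ℕ}
    (f : (Fin d → ℕ) → ℕ) (hf : ObliviouslyComputable f)
    (A : Fin l → Fin d → ℝ) (c : Fin l → ℝ) (D : Set (Fin d → ℝ))
    (hD : D = {x | ∀ k, c k ≤ ∑ i, A k i * x i})
    (hDpos : ∀ x ∈ D, ∀ i, 0 ≤ x i)
    (hDne : ∃ x : Fin d → ℕ, natToR x ∈ D)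
    (hrecc : affineSpan ℝ
      {y : Fin d → ℝ | ∀ x ∈ D, ∀ t : ℝ, 0 ≤ t → x + t • y ∈ D} = ⊤)
    (g : (Fin d → ℕ) → ℤ) (hg : QuiltAffine g)
    (hagree : ∀ x : Fin d → ℕ, natToR x ∈ D → g x = (f x : ℤ)) :
    ∃ n : Fin d → ℕ, ∀ x : Fin d → ℕ, n ≤ x → (f x : ℤ) ≤ g x := by
  obtain ⟨nC, C, hOO, hSC⟩ := hf
  obtain ⟨-, p, hp, grad, B, -, hform⟩ := hg
  obtain ⟨x₀, hx₀⟩ := hDne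
  obtain ⟨v, hvdvd, hG1, hG3⟩ := geo_lemma A c D hD hDpos x₀ hx₀ hrecc p hp
  obtain ⟨δ, hδ⟩ := quilt_step g p hp grad B hform v hvdvd
  obtain ⟨j, m, hm0, hmono, hpump⟩ := CRN.pump_exists hOO hSC x₀ v
  refine ⟨x₀ + j • v, ?_⟩
  intro x hx
  -- basic facts
  have hx₀x : x₀ ≤ x := fun i => le_trans (Nat.le_add_right _ _) (hx i)
  obtain ⟨t, ht0, htD⟩ := hG3 x hx₀x m hm0
  -- values of f and g on the ray points
  set z₁ : Fin d → ℕ := x₀ + j • v with hz₁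
  set z₂ : Fin d → ℕ := x₀ + (j + m) • v with hz₂
  have hz₁D : natToR z₁ ∈ D := hG1 x₀ hx₀ j
  have hz₂D : natToR z₂ ∈ D := hG1 x₀ hx₀ (j + m)
  have hz₂eq : z₂ = z₁ + m • v := by
    rw [hz₂, hz₁, add_smul, add_assoc]
  -- g relations
  have hgz : g z₂ = g z₁ + m * δ := by
    rw [hz₂eq]
    exact hδ z₁ m
  have hgx : g (x + (t * m) • v) = g x + (t * m : ℕ) * δ := hδ x (t * m)
  -- f = g on D points
  have hfz₁ : g z₁ = (f z₁ : ℤ) := hagree z₁ hz₁D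
  have hfz₂ : g z₂ = (f z₂ : ℤ) := hagree z₂ hz₂D
  have hfx' : g (x + (t * m) • v) = (f (x + (t * m) • v) : ℤ) := hagree _ htD
  -- the CRN pumping inequality
  have hcrn := hpump x hx t
  -- E = f z₂ - f z₁ as a natural number
  have hE : ((f z₂ - f z₁ : ℕ) : ℤ) = m * δ := by
    have h1 : ((f z₂ - f z₁ : ℕ) : ℤ) = (f z₂ : ℤ) - (f z₁ : ℤ) := by
      have := hmono
      omega
    rw [h1, ← hfz₁, ← hfz₂]
    omega
  -- cast the CRN inequality to ℤ and conclude
  have hcast : (f x : ℤ) + t * ((f z₂ - f z₁ : ℕ) : ℤ) ≤ (f (x + (t * m) • v) : ℤ) := by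
    exact_mod_cast hcrn
  rw [hE, ← hfx', hgx] at hcast
  have : ((t * m : ℕ) : ℤ) * δ = t * (m * δ) := by push_cast; ring
  rw [this] at hcast
  linarith
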